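/- Let {X_k}_{k≥1} be a real-valued martingale-difference sequence with respect to a filtration {F_k}_{k≥0} with E[exp(δ|X_k|) | F_{k-1}] ≤ C almost surely for all k, for constants δ, C > 0. Let S_n = Σ_{k=1}^{n} α_{k,n} X_k with α_{k,n} F_{k-1}-measurable and |α_{k,n}| ≤ A_{k,n} almost surely, where Σ_{k=1}^{n} A_{k,n} ≤ γ₁ and max_{1≤k≤n} A_{k,n} ≤ γ₂ β_n for constants γ₁, γ₂ > 0 and a positive sequence {β_n}. Then for every n and every ω with 0 < ω < 1/(γ₂ β_n): E[exp(ω δ S_n)] ≤ exp( C γ₁ γ₂ ω² β_n / (1 − γ₂ β_n ω) ). -/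

import Mathlib

open MeasureTheory



lemma pow_div_factorial_le_exp' {t : ℝ} (ht : 0 ≤ t) (k : ℕ) :
    t ^ k / k.factorial ≤ Real.exp t := by
  calc t ^ k / k.factorial
      ≤ ∑ i ∈ Finset.range (k + 1), t ^ i / i.factorial := by
        refine Finset.single_le_sum (f := fun i => t ^ i / i.factorial)
          (fun i _ => by positivity) (Finset.self_mem_range_succ k)
    _ ≤ Real.exp t := Real.sum_le_exp_of_nonneg ht _

set_option maxHeartbeats 1000000 in
lemma keyA {u t a : ℝ} (ht : 0 ≤ t) (ha : 0 ≤ a) (ha1 : a < 1) (hu : |u| ≤ a * t) :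
    Real.exp u ≤ 1 + u + a ^ 2 / (1 - a) * Real.exp t := by
  have hexp : Real.exp u = ∑' n : ℕ, u ^ n / n.factorial := by
    rw [Real.exp_eq_exp_ℝ, NormedSpace.exp_eq_tsum_div]
  have hs : Summable (fun n : ℕ => u ^ n / n.factorial) := Real.summable_pow_div_factorial u
  have hs1 : Summable (fun n : ℕ => u ^ (n + 1) / (n + 1).factorial) :=
    (summable_nat_add_iff 1).2 hs
  have hs2 : Summable (fun n : ℕ => u ^ (n + 2) / (n + 2).factorial) :=
    (summable_nat_add_iff 2).2 hs
  have hg : Summable (fun n : ℕ => a ^ n * (a ^ 2 * Real.exp t)) :=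
    (summable_geometric_of_lt_one ha ha1).mul_right _
  have hsplit : ∑' n : ℕ, u ^ n / n.factorial
      = 1 + u + ∑' n : ℕ, u ^ (n + 2) / (n + 2).factorial := by
    rw [Summable.tsum_eq_zero_add hs, Summable.tsum_eq_zero_add hs1]
    simp [Nat.factorial]
    ring
  have htail : ∑' n : ℕ, u ^ (n + 2) / (n + 2).factorial
      ≤ ∑' n : ℕ, a ^ n * (a ^ 2 * Real.exp t) := by
    refine Summable.tsum_le_tsum (fun n => ?_) hs2 hg
    have h1 : u ^ (n + 2) / (n + 2).factorial ≤ |u| ^ (n + 2) / (n + 2).factorial := by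
      have hnum : u ^ (n + 2) ≤ |u| ^ (n + 2) := by
        rw [← abs_pow]; exact le_abs_self _
      exact div_le_div_of_nonneg_right hnum (by positivity)
    have h2 : |u| ^ (n + 2) / (n + 2).factorial ≤ (a * t) ^ (n + 2) / (n + 2).factorial := by
      have hnum : |u| ^ (n + 2) ≤ (a * t) ^ (n + 2) :=
        pow_le_pow_left₀ (abs_nonneg u) hu _
      exact div_le_div_of_nonneg_right hnum (by positivity)
    have h3 : (a * t) ^ (n + 2) / (n + 2).factorial
        = a ^ (n + 2) * (t ^ (n + 2) / (n + 2).factorial) := by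
      rw [mul_pow]; ring
    have h4 : t ^ (n + 2) / ((n + 2).factorial : ℝ) ≤ Real.exp t :=
      pow_div_factorial_le_exp' ht (n + 2)
    calc u ^ (n + 2) / (n + 2).factorial ≤ (a * t) ^ (n + 2) / (n + 2).factorial :=
          h1.trans h2
      _ = a ^ (n + 2) * (t ^ (n + 2) / (n + 2).factorial) := h3
      _ ≤ a ^ (n + 2) * Real.exp t := mul_le_mul_of_nonneg_left h4 (by positivity)
      _ = a ^ n * (a ^ 2 * Real.exp t) := by ring
  have hgeo : ∑' n : ℕ, a ^ n * (a ^ 2 * Real.exp t) = a ^ 2 / (1 - a) * Real.exp t := by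
    rw [tsum_mul_right, tsum_geometric_of_lt_one ha ha1]
    field_simp
  rw [hexp, hsplit]
  linarith [htail.trans_eq hgeo]



lemma zeroC {Ω : Type*} {m0 : MeasurableSpace Ω} {μ : Measure Ω} [IsProbabilityMeasure μ]
    {m : MeasurableSpace Ω} (hm : m ≤ m0) {f g : Ω → ℝ}
    (hf : StronglyMeasurable[m] f) (hg : Integrable g μ) (hfg : Integrable (f * g) μ)
    (h0 : μ[g|m] =ᵐ[μ] 0) : ∫ ω, f ω * g ω ∂μ = 0 := by
  have h1 : μ[f * g|m] =ᵐ[μ] f * μ[g|m] := condExp_mul_of_stronglyMeasurable_left hf hfg hg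
  have h2 : f * μ[g|m] =ᵐ[μ] 0 := by
    filter_upwards [h0] with ω hω
    simp only [Pi.mul_apply, Pi.zero_apply] at *
    rw [hω, mul_zero]
  have h3 : μ[f * g|m] =ᵐ[μ] 0 := h1.trans h2
  calc ∫ ω, f ω * g ω ∂μ = ∫ ω, (f * g) ω ∂μ := rfl
    _ = ∫ ω, (μ[f * g|m]) ω ∂μ := (integral_condExp hm).symm
    _ = ∫ ω, (0 : Ω → ℝ) ω ∂μ := integral_congr_ae h3
    _ = 0 := by simp

lemma towerB {Ω : Type*} {m0 : MeasurableSpace Ω} {μ : Measure Ω} [IsProbabilityMeasure μ]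
    {m : MeasurableSpace Ω} (hm : m ≤ m0) {f h : Ω → ℝ} {C : ℝ} (hC : 0 ≤ C)
    (hfm : StronglyMeasurable[m] f) (hf0 : ∀ ω, 0 ≤ f ω) (hfi : Integrable f μ)
    (hh0 : ∀ ω, 0 ≤ h ω) (hhi : Integrable h μ)
    (hch : ∀ᵐ ω ∂μ, (μ[h|m]) ω ≤ C) :
    Integrable (fun ω => f ω * h ω) μ ∧ ∫ ω, f ω * h ω ∂μ ≤ C * ∫ ω, f ω ∂μ := by
  have hfm0 : StronglyMeasurable[m0] f := hfm.mono hm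
  set fN : ℕ → Ω → ℝ := fun N ω => min (f ω) N with hfNdef
  have hfNm : ∀ N : ℕ, StronglyMeasurable[m] (fN N) := fun N =>
    hfm.inf (stronglyMeasurable_const : StronglyMeasurable[m] fun _ => (N : ℝ))
  have hfN0 : ∀ (N : ℕ) ω, 0 ≤ fN N ω := fun N ω =>
    le_min (hf0 ω) (Nat.cast_nonneg N)
  have hfNle : ∀ (N : ℕ) ω, fN N ω ≤ f ω := fun N ω => min_le_left _ _
  have hfNb : ∀ (N : ℕ) ω, ‖fN N ω‖ ≤ (N : ℝ) := by
    intro N ω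
    rw [Real.norm_eq_abs, abs_of_nonneg (hfN0 N ω)]
    exact min_le_right _ _
  have hfNh_int : ∀ N : ℕ, Integrable (fN N * h) μ := fun N =>
    hhi.bdd_mul ((hfNm N).mono hm).aestronglyMeasurable (ae_of_all _ (hfNb N))
  have hfN_int : ∀ N : ℕ, Integrable (fN N) μ := by
    intro N
    refine hfi.mono ((hfNm N).mono hm).aestronglyMeasurable (ae_of_all _ fun ω => ?_)
    rw [Real.norm_eq_abs, Real.norm_eq_abs, abs_of_nonneg (hfN0 N ω),
      abs_of_nonneg (hf0 ω)]
    exact hfNle N ω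
  have hstep : ∀ N : ℕ, ∫ ω, fN N ω * h ω ∂μ ≤ C * ∫ ω, f ω ∂μ := by
    intro N
    have hce : μ[fN N * h|m] =ᵐ[μ] fN N * μ[h|m] :=
      condExp_mul_of_stronglyMeasurable_left (hfNm N) (hfNh_int N) hhi
    have hcond_int : Integrable (fN N * μ[h|m]) μ :=
      integrable_condExp.bdd_mul ((hfNm N).mono hm).aestronglyMeasurable (ae_of_all _ (hfNb N))
    have h1 : ∫ ω, fN N ω * h ω ∂μ = ∫ ω, (fN N * μ[h|m]) ω ∂μ := by
      calc ∫ ω, fN N ω * h ω ∂μ = ∫ ω, (fN N * h) ω ∂μ := rfl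
        _ = ∫ ω, (μ[fN N * h|m]) ω ∂μ := (integral_condExp hm).symm
        _ = ∫ ω, (fN N * μ[h|m]) ω ∂μ := integral_congr_ae hce
    have h2 : ∫ ω, (fN N * μ[h|m]) ω ∂μ ≤ ∫ ω, C * fN N ω ∂μ := by
      refine integral_mono_ae hcond_int ((hfN_int N).const_mul C) ?_
      filter_upwards [hch] with ω hω
      calc (fN N * μ[h|m]) ω = fN N ω * (μ[h|m]) ω := rfl
        _ ≤ fN N ω * C := mul_le_mul_of_nonneg_left hω (hfN0 N ω)
        _ = C * fN N ω := mul_comm _ _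
    have h3 : ∫ ω, C * fN N ω ∂μ ≤ C * ∫ ω, f ω ∂μ := by
      rw [integral_const_mul]
      exact mul_le_mul_of_nonneg_left (integral_mono (hfN_int N) hfi (hfNle N)) hC
    linarith
  have haem : ∀ N : ℕ, AEMeasurable (fun ω => ENNReal.ofReal (fN N ω * h ω)) μ := by
    intro N
    exact (((hfNm N).mono hm).aestronglyMeasurable.mul
      hhi.aestronglyMeasurable).aemeasurable.ennreal_ofReal
  have hmono : ∀ ω, Monotone (fun N : ℕ => ENNReal.ofReal (fN N ω * h ω)) := by
    intro ω N M hNM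
    exact ENNReal.ofReal_le_ofReal (mul_le_mul_of_nonneg_right
      (min_le_min le_rfl (Nat.cast_le.2 hNM)) (hh0 ω))
  have hsup : ∀ ω, (⨆ N : ℕ, ENNReal.ofReal (fN N ω * h ω)) = ENNReal.ofReal (f ω * h ω) := by
    intro ω
    obtain ⟨N0, hN0⟩ := exists_nat_ge (f ω)
    apply le_antisymm
    · exact iSup_le fun N => ENNReal.ofReal_le_ofReal
        (mul_le_mul_of_nonneg_right (hfNle N ω) (hh0 ω))
    · have heq : fN N0 ω = f ω := min_eq_left hN0
      calc ENNReal.ofReal (f ω * h ω) = ENNReal.ofReal (fN N0 ω * h ω) := by rw [heq]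
        _ ≤ ⨆ N : ℕ, ENNReal.ofReal (fN N ω * h ω) :=
          le_iSup (fun N : ℕ => ENNReal.ofReal (fN N ω * h ω)) N0
  have hlin : ∫⁻ ω, ENNReal.ofReal (f ω * h ω) ∂μ
      = ⨆ N : ℕ, ∫⁻ ω, ENNReal.ofReal (fN N ω * h ω) ∂μ := by
    calc ∫⁻ ω, ENNReal.ofReal (f ω * h ω) ∂μ
        = ∫⁻ ω, ⨆ N : ℕ, ENNReal.ofReal (fN N ω * h ω) ∂μ :=
          lintegral_congr fun ω => (hsup ω).symm
      _ = ⨆ N : ℕ, ∫⁻ ω, ENNReal.ofReal (fN N ω * h ω) ∂μ :=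
          lintegral_iSup' haem (ae_of_all _ hmono)
  have hNval : ∀ N : ℕ, ∫⁻ ω, ENNReal.ofReal (fN N ω * h ω) ∂μ
      = ENNReal.ofReal (∫ ω, fN N ω * h ω ∂μ) := fun N =>
    (ofReal_integral_eq_lintegral_ofReal (hfNh_int N)
      (ae_of_all _ fun ω => mul_nonneg (hfN0 N ω) (hh0 ω))).symm
  have hbound : ∫⁻ ω, ENNReal.ofReal (f ω * h ω) ∂μ ≤ ENNReal.ofReal (C * ∫ ω, f ω ∂μ) := by
    rw [hlin]
    exact iSup_le fun N => (hNval N).le.trans (ENNReal.ofReal_le_ofReal (hstep N))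
  have hint : Integrable (fun ω => f ω * h ω) μ := by
    refine ⟨hfm0.aestronglyMeasurable.mul hhi.aestronglyMeasurable, ?_⟩
    rw [hasFiniteIntegral_iff_ofReal (ae_of_all _ fun ω => mul_nonneg (hf0 ω) (hh0 ω))]
    exact lt_of_le_of_lt hbound ENNReal.ofReal_lt_top
  refine ⟨hint, ?_⟩
  rw [integral_eq_lintegral_of_nonneg_ae (ae_of_all _ fun ω => mul_nonneg (hf0 ω) (hh0 ω))
    (hfm0.aestronglyMeasurable.mul hhi.aestronglyMeasurable)]
  exact ENNReal.toReal_le_of_le_ofReal (mul_nonneg hC (integral_nonneg hf0)) hbound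

section Main

variable {Ω : Type*} {m0 : MeasurableSpace Ω}

theorem stmt4' (μ : Measure Ω)
    [IsProbabilityMeasure μ]
    (ℱ : Filtration ℕ m0) (X : ℕ → Ω → ℝ)
    (δ C γ₁ γ₂ : ℝ) (hδ : 0 < δ) (hC : 0 < C) (hγ₁ : 0 < γ₁) (hγ₂ : 0 < γ₂)
    (α : ℕ → ℕ → Ω → ℝ) (A : ℕ → ℕ → ℝ) (β : ℕ → ℝ)
    (hadp : ∀ k, StronglyMeasurable[ℱ k] (X k))
    (hint : ∀ k, Integrable (X k) μ)
    (hmds : ∀ k : ℕ, 1 ≤ k → μ[X k|ℱ (k - 1)] =ᵐ[μ] 0)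
    (hexpint : ∀ k : ℕ, 1 ≤ k → Integrable (fun ω => Real.exp (δ * |X k ω|)) μ)
    (hcond : ∀ k : ℕ, 1 ≤ k → ∀ᵐ ω ∂μ,
      (μ[fun ω' => Real.exp (δ * |X k ω'|)|ℱ (k - 1)]) ω ≤ C)
    (hα : ∀ k n : ℕ, StronglyMeasurable[ℱ (k - 1)] (α k n))
    (hA : ∀ k n : ℕ, 0 < A k n)
    (hαA : ∀ k n : ℕ, ∀ᵐ ω ∂μ, |α k n ω| ≤ A k n)
    (hsum : ∀ n : ℕ, ∑ k ∈ Finset.Icc 1 n, A k n ≤ γ₁)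
    (hβ : ∀ n : ℕ, 0 < β n)
    (hmax : ∀ n k : ℕ, 1 ≤ k → k ≤ n → A k n ≤ γ₂ * β n) :
    ∀ (n : ℕ) (w : ℝ), 0 < w → w < 1 / (γ₂ * β n) →
      ∫ ω, Real.exp (w * δ * ∑ k ∈ Finset.Icc 1 n, α k n ω * X k ω) ∂μ ≤
        Real.exp (C * γ₁ * γ₂ * w ^ 2 * β n / (1 - γ₂ * β n * w)) := by
  intro n w hw hw2
  have hβn := hβ n
  have hγβ : 0 < γ₂ * β n := mul_pos hγ₂ hβn
  set θ := γ₂ * β n * w with hθdef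
  have hθ1 : θ < 1 := by
    rw [lt_div_iff₀ hγβ] at hw2
    calc θ = w * (γ₂ * β n) := by ring
      _ < 1 := hw2
  have hθ0 : 0 < θ := mul_pos hγβ hw
  have h1θ : 0 < 1 - θ := by linarith
  set b : ℕ → ℝ := fun k => C * (w * A k n) * θ / (1 - θ) with hbdef
  have main : ∀ m : ℕ, m ≤ n →
      Integrable (fun ω => Real.exp (w * δ * ∑ k ∈ Finset.Icc 1 m, α k n ω * X k ω)) μ ∧
      ∫ ω, Real.exp (w * δ * ∑ k ∈ Finset.Icc 1 m, α k n ω * X k ω) ∂μ ≤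
        Real.exp (∑ k ∈ Finset.Icc 1 m, b k) := by
    intro m
    induction m with
    | zero =>
      intro _
      have he : Finset.Icc 1 0 = (∅ : Finset ℕ) := by simp
      constructor
      · simpa [he] using integrable_const (μ := μ) (1 : ℝ)
      · simp [he]
    | succ j ih =>
      intro hjn
      obtain ⟨hfint, hfle⟩ := ih (Nat.le_of_succ_le hjn)
      set f : Ω → ℝ := fun ω => Real.exp (w * δ * ∑ k ∈ Finset.Icc 1 j, α k n ω * X k ω)
        with hfdef
      set u : Ω → ℝ := fun ω => w * δ * (α (j + 1) n ω * X (j + 1) ω) with hudef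
      set h : Ω → ℝ := fun ω => Real.exp (δ * |X (j + 1) ω|) with hhdef
      set a : ℝ := w * A (j + 1) n with hadef
      have ha0 : 0 ≤ a := mul_nonneg hw.le (hA (j + 1) n).le
      have haθ : a ≤ θ := by
        calc a ≤ w * (γ₂ * β n) :=
              mul_le_mul_of_nonneg_left (hmax n (j + 1) (Nat.le_add_left 1 j) hjn) hw.le
          _ = θ := by ring
      have ha1 : a < 1 := lt_of_le_of_lt haθ hθ1
      set c : ℝ := a ^ 2 / (1 - a) with hcdef
      have hc0 : 0 ≤ c := div_nonneg (by positivity) (by linarith)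
      -- measurability
      have hTm : StronglyMeasurable[ℱ j] (fun ω => ∑ k ∈ Finset.Icc 1 j, α k n ω * X k ω) := by
        apply Finset.stronglyMeasurable_fun_sum
        intro k hk
        have hk2 : k ≤ j := (Finset.mem_Icc.1 hk).2
        exact ((hα k n).mono (ℱ.mono (by omega))).mul ((hadp k).mono (ℱ.mono hk2))
      have hfm : StronglyMeasurable[ℱ j] f :=
        Real.continuous_exp.comp_stronglyMeasurable (stronglyMeasurable_const.mul hTm)
      have hfm0 : StronglyMeasurable[m0] f := hfm.mono (ℱ.le j)
      have hαm : StronglyMeasurable[ℱ j] (α (j + 1) n) := hα (j + 1) n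
      have hum0 : StronglyMeasurable[m0] u :=
        stronglyMeasurable_const.mul
          ((hαm.mono (ℱ.le j)).mul ((hadp (j + 1)).mono (ℱ.le (j + 1))))
      have hf0 : ∀ ω, 0 ≤ f ω := fun ω => (Real.exp_pos _).le
      have hh0 : ∀ ω, 0 ≤ h ω := fun ω => (Real.exp_pos _).le
      have hh_int : Integrable h μ := hexpint (j + 1) (Nat.le_add_left 1 j)
      have hcond' : ∀ᵐ ω ∂μ, (μ[h|ℱ j]) ω ≤ C := hcond (j + 1) (Nat.le_add_left 1 j)
      obtain ⟨hfh_int, hfh_le⟩ :=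
        towerB (ℱ.le j) hC.le hfm hf0 hfint hh0 hh_int hcond'
      -- a.e. bound on |u|
      have hae1 : ∀ᵐ ω ∂μ, |u ω| ≤ a * (δ * |X (j + 1) ω|) := by
        filter_upwards [hαA (j + 1) n] with ω hω
        have h1 : |u ω| = w * δ * (|α (j + 1) n ω| * |X (j + 1) ω|) := by
          rw [hudef]
          dsimp only
          rw [abs_mul, abs_mul, abs_mul, abs_of_pos hw, abs_of_pos hδ]
        rw [h1]
        calc w * δ * (|α (j + 1) n ω| * |X (j + 1) ω|)
            ≤ w * δ * (A (j + 1) n * |X (j + 1) ω|) :=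
              mul_le_mul_of_nonneg_left
                (mul_le_mul_of_nonneg_right hω (abs_nonneg _)) (mul_pos hw hδ).le
          _ = a * (δ * |X (j + 1) ω|) := by rw [hadef]; ring
      -- δ|X| ≤ h
      have hXh : ∀ ω, δ * |X (j + 1) ω| ≤ h ω := fun ω => by
        have := Real.add_one_le_exp (δ * |X (j + 1) ω|)
        rw [hhdef]; dsimp only; linarith
      have huh : ∀ᵐ ω ∂μ, |u ω| ≤ a * h ω := by
        filter_upwards [hae1] with ω hω
        exact hω.trans (mul_le_mul_of_nonneg_left (hXh ω) ha0)
      -- key inequality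
      set r : Ω → ℝ := fun ω => Real.exp (u ω) - 1 - u ω with hrdef
      have hr0 : ∀ ω, 0 ≤ r ω := fun ω => by
        have := Real.add_one_le_exp (u ω); rw [hrdef]; dsimp only; linarith
      have hrc : ∀ᵐ ω ∂μ, r ω ≤ c * h ω := by
        filter_upwards [hae1] with ω hω
        have := keyA (mul_nonneg hδ.le (abs_nonneg _)) ha0 ha1 hω
        rw [hrdef]; dsimp only; rw [hhdef]; dsimp only
        rw [hcdef]
        linarith
      have hrm0 : StronglyMeasurable[m0] r :=
        ((Real.continuous_exp.comp_stronglyMeasurable hum0).sub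
          stronglyMeasurable_const).sub hum0
      -- integrability pieces
      have hfu_int : Integrable (fun ω => f ω * u ω) μ := by
        refine Integrable.mono (hfh_int.const_mul a)
          ((hfm0.mul hum0).aestronglyMeasurable) ?_
        filter_upwards [huh] with ω hω
        rw [Real.norm_eq_abs, Real.norm_eq_abs, abs_mul, abs_of_nonneg (hf0 ω),
          abs_of_nonneg (mul_nonneg ha0 (mul_nonneg (hf0 ω) (hh0 ω)))]
        calc f ω * |u ω| ≤ f ω * (a * h ω) :=
              mul_le_mul_of_nonneg_left hω (hf0 ω)
          _ = a * (f ω * h ω) := by ring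
      have hfr_int : Integrable (fun ω => f ω * r ω) μ := by
        refine Integrable.mono (hfh_int.const_mul c)
          ((hfm0.mul hrm0).aestronglyMeasurable) ?_
        filter_upwards [hrc] with ω hω
        rw [Real.norm_eq_abs, Real.norm_eq_abs,
          abs_of_nonneg (mul_nonneg (hf0 ω) (hr0 ω)),
          abs_of_nonneg (mul_nonneg hc0 (mul_nonneg (hf0 ω) (hh0 ω)))]
        calc f ω * r ω ≤ f ω * (c * h ω) := mul_le_mul_of_nonneg_left hω (hf0 ω)
          _ = c * (f ω * h ω) := by ring
      have hfαX_int : Integrable (fun ω => (f ω * α (j + 1) n ω) * X (j + 1) ω) μ := by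
        refine Integrable.mono (hfh_int.const_mul (A (j + 1) n / δ))
          ((hfm0.mul (hαm.mono (ℱ.le j))).mul
            ((hadp (j + 1)).mono (ℱ.le (j + 1)))).aestronglyMeasurable ?_
        filter_upwards [hαA (j + 1) n] with ω hω
        rw [Real.norm_eq_abs, Real.norm_eq_abs, abs_mul, abs_mul,
          abs_of_nonneg (hf0 ω),
          abs_of_nonneg (mul_nonneg (div_nonneg (hA _ _).le hδ.le) (mul_nonneg (hf0 ω) (hh0 ω)))]
        have hX : |X (j + 1) ω| ≤ h ω / δ := by
          rw [le_div_iff₀ hδ]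
          calc |X (j + 1) ω| * δ = δ * |X (j + 1) ω| := mul_comm _ _
            _ ≤ h ω := hXh ω
        calc f ω * |α (j + 1) n ω| * |X (j + 1) ω|
            ≤ f ω * A (j + 1) n * (h ω / δ) := by
              have h1 : f ω * |α (j + 1) n ω| ≤ f ω * A (j + 1) n :=
                mul_le_mul_of_nonneg_left hω (hf0 ω)
              exact mul_le_mul h1 hX (abs_nonneg _) (mul_nonneg (hf0 ω) (hA _ _).le)
          _ = A (j + 1) n / δ * (f ω * h ω) := by ring
      -- the product decomposition
      have hdecomp : (fun ω => f ω * Real.exp (u ω))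
          = fun ω => f ω + (f ω * u ω + f ω * r ω) := by
        funext ω
        rw [hrdef]; dsimp only; ring
      have hfg_int : Integrable (fun ω => f ω * Real.exp (u ω)) μ := by
        rw [hdecomp]; exact hfint.add (hfu_int.add hfr_int)
      -- ∫ f u = 0
      have hzero : ∫ ω, (f ω * α (j + 1) n ω) * X (j + 1) ω ∂μ = 0 := by
        refine zeroC (ℱ.le j) (hfm.mul hαm) (hint (j + 1)) ?_ ?_
        · exact hfαX_int
        · simpa using hmds (j + 1) (Nat.le_add_left 1 j)
      have hfu0 : ∫ ω, f ω * u ω ∂μ = 0 := by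
        have heq : (fun ω => f ω * u ω)
            = fun ω => (w * δ) * ((f ω * α (j + 1) n ω) * X (j + 1) ω) := by
          funext ω; rw [hudef]; dsimp only; ring
        rw [heq, integral_const_mul, hzero, mul_zero]
      -- ∫ f r ≤ c C ∫ f
      have hfr_le : ∫ ω, f ω * r ω ∂μ ≤ c * (C * ∫ ω, f ω ∂μ) := by
        have h5 : ∫ ω, f ω * r ω ∂μ ≤ ∫ ω, c * (f ω * h ω) ∂μ := by
          refine integral_mono_ae hfr_int (hfh_int.const_mul c) ?_
          filter_upwards [hrc] with ω hω
          calc f ω * r ω ≤ f ω * (c * h ω) := mul_le_mul_of_nonneg_left hω (hf0 ω)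
            _ = c * (f ω * h ω) := by ring
        rw [integral_const_mul] at h5
        exact h5.trans (mul_le_mul_of_nonneg_left hfh_le hc0)
      -- rewrite the target function
      have hsplit : (fun ω => Real.exp (w * δ * ∑ k ∈ Finset.Icc 1 (j + 1), α k n ω * X k ω))
          = fun ω => f ω * Real.exp (u ω) := by
        funext ω
        rw [Finset.sum_Icc_succ_top (Nat.le_add_left 1 j), hfdef, hudef]
        dsimp only
        rw [mul_add, Real.exp_add]
      have hIf0 : 0 ≤ ∫ ω, f ω ∂μ := integral_nonneg hf0
      have hcCb : c * C ≤ b (j + 1) := by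
        have hab : c ≤ a * θ / (1 - θ) := by
          refine div_le_div₀ (mul_nonneg ha0 hθ0.le) (by nlinarith) h1θ (by linarith)
        have : c * C ≤ a * θ / (1 - θ) * C :=
          mul_le_mul_of_nonneg_right hab hC.le
        rw [hbdef]; dsimp only
        rw [hadef] at this
        calc c * C ≤ w * A (j + 1) n * θ / (1 - θ) * C := this
          _ = C * (w * A (j + 1) n) * θ / (1 - θ) := by ring
      constructor
      · rw [hsplit]; exact hfg_int
      · rw [hsplit]
        have hI : ∫ ω, f ω * Real.exp (u ω) ∂μ
            = ∫ ω, f ω ∂μ + (∫ ω, f ω * u ω ∂μ + ∫ ω, f ω * r ω ∂μ) := by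
          have h6 : Integrable (fun ω => f ω * u ω + f ω * r ω) μ := by
            exact hfu_int.add hfr_int
          rw [hdecomp, integral_add hfint h6, integral_add hfu_int hfr_int]
        rw [hI, hfu0, zero_add]
        have step1 : ∫ ω, f ω ∂μ + ∫ ω, f ω * r ω ∂μ
            ≤ (1 + c * C) * ∫ ω, f ω ∂μ := by nlinarith [hfr_le]
        have step2 : (1 + c * C) * ∫ ω, f ω ∂μ ≤ Real.exp (c * C) * ∫ ω, f ω ∂μ := by
          refine mul_le_mul_of_nonneg_right ?_ hIf0
          have := Real.add_one_le_exp (c * C); linarith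
        have step3 : Real.exp (c * C) * ∫ ω, f ω ∂μ
            ≤ Real.exp (b (j + 1)) * Real.exp (∑ k ∈ Finset.Icc 1 j, b k) := by
          calc Real.exp (c * C) * ∫ ω, f ω ∂μ
              ≤ Real.exp (c * C) * Real.exp (∑ k ∈ Finset.Icc 1 j, b k) :=
                mul_le_mul_of_nonneg_left hfle (Real.exp_pos _).le
            _ ≤ Real.exp (b (j + 1)) * Real.exp (∑ k ∈ Finset.Icc 1 j, b k) :=
                mul_le_mul_of_nonneg_right (Real.exp_le_exp.2 hcCb) (Real.exp_pos _).le
        have step4 : Real.exp (b (j + 1)) * Real.exp (∑ k ∈ Finset.Icc 1 j, b k)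
            = Real.exp (∑ k ∈ Finset.Icc 1 (j + 1), b k) := by
          rw [Finset.sum_Icc_succ_top (Nat.le_add_left 1 j), ← Real.exp_add]
          exact congrArg Real.exp (add_comm _ _)
        linarith
  obtain ⟨_, hfin⟩ := main n le_rfl
  refine hfin.trans (Real.exp_le_exp.2 ?_)
  have hbsum : ∑ k ∈ Finset.Icc 1 n, b k
      = C * w * θ / (1 - θ) * ∑ k ∈ Finset.Icc 1 n, A k n := by
    rw [Finset.mul_sum]
    refine Finset.sum_congr rfl fun k _ => ?_
    rw [hbdef]; dsimp only; ring
  rw [hbsum]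
  have hcoef : 0 ≤ C * w * θ / (1 - θ) :=
    div_nonneg (mul_nonneg (mul_nonneg hC.le hw.le) hθ0.le) h1θ.le
  calc C * w * θ / (1 - θ) * ∑ k ∈ Finset.Icc 1 n, A k n
      ≤ C * w * θ / (1 - θ) * γ₁ := mul_le_mul_of_nonneg_left (hsum n) hcoef
    _ = C * γ₁ * γ₂ * w ^ 2 * β n / (1 - γ₂ * β n * w) := by
        rw [hθdef]
        field_simp

end Main


/-- With {X_k} a real martingale-difference sequence satisfying
E[exp(δ|X_k|)|F_{k-1}] ≤ C a.s., and S_n = Σ_{k=1}^n α_{k,n} X_k with α_{k,n}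
F_{k-1}-measurable, |α_{k,n}| ≤ A_{k,n} a.s., Σ_{k=1}^n A_{k,n} ≤ γ₁,
max_{1≤k≤n} A_{k,n} ≤ γ₂ β_n: for every n and 0 < ω < 1/(γ₂ β_n),
E[exp(ω δ S_n)] ≤ exp(C γ₁ γ₂ ω² β_n / (1 − γ₂ β_n ω)). -/
theorem stmt4 {Ω : Type*} {m0 : MeasurableSpace Ω} (μ : Measure Ω)
    [IsProbabilityMeasure μ]
    (ℱ : Filtration ℕ m0) (X : ℕ → Ω → ℝ)
    (δ C γ₁ γ₂ : ℝ) (hδ : 0 < δ) (hC : 0 < C) (hγ₁ : 0 < γ₁) (hγ₂ : 0 < γ₂)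
    (α : ℕ → ℕ → Ω → ℝ) (A : ℕ → ℕ → ℝ) (β : ℕ → ℝ)
    (hadp : ∀ k, StronglyMeasurable[ℱ k] (X k))
    (hint : ∀ k, Integrable (X k) μ)
    (hmds : ∀ k : ℕ, 1 ≤ k → μ[X k|ℱ (k - 1)] =ᵐ[μ] 0)
    (hexpint : ∀ k : ℕ, 1 ≤ k → Integrable (fun ω => Real.exp (δ * |X k ω|)) μ)
    (hcond : ∀ k : ℕ, 1 ≤ k → ∀ᵐ ω ∂μ,
      (μ[fun ω' => Real.exp (δ * |X k ω'|)|ℱ (k - 1)]) ω ≤ C)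
    (hα : ∀ k n : ℕ, StronglyMeasurable[ℱ (k - 1)] (α k n))
    (hA : ∀ k n : ℕ, 0 < A k n)
    (hαA : ∀ k n : ℕ, ∀ᵐ ω ∂μ, |α k n ω| ≤ A k n)
    (hsum : ∀ n : ℕ, ∑ k ∈ Finset.Icc 1 n, A k n ≤ γ₁)
    (hβ : ∀ n : ℕ, 0 < β n)
    (hmax : ∀ n k : ℕ, 1 ≤ k → k ≤ n → A k n ≤ γ₂ * β n) :
    ∀ (n : ℕ) (w : ℝ), 0 < w → w < 1 / (γ₂ * β n) →
      ∫ ω, Real.exp (w * δ * ∑ k ∈ Finset.Icc 1 n, α k n ω * X k ω) ∂μ ≤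
        Real.exp (C * γ₁ * γ₂ * w ^ 2 * β n / (1 - γ₂ * β n * w)) := by
  exact stmt4' μ ℱ X δ C γ₁ γ₂ hδ hC hγ₁ hγ₂ α A β hadp hint hmds hexpint hcond
    hα hA hαA hsum hβ hmax
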